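/- Let (X_t) be the conditioned walk on the positive integers started at x ≥ 1. Then the probability of never returning to the starting point is P̂_x[τ̄_x = ∞] = 1/(2x). In particular the conditioned walk is transient. -/

import Mathlib

open MeasureTheory ProbabilityTheory Finset
open scoped ENNReal

/-- One step transition probability of the simple random walk on the positive
integers conditioned to never hit the origin:
`P(x, x+1) = (x+1)/(2x)` and `P(x, x-1) = (x-1)/(2x)`. -/
noncomputable def condStep (u v : ℤ) : ℝ≥0∞ :=
  ENNReal.ofReal
    (if v = u + 1 then ((u : ℝ) + 1) / (2 * u)
      else if v = u - 1 then ((u : ℝ) - 1) / (2 * u) else 0)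

/-- `Pr` is the law of the conditioned walk `X` (the walk on the positive
integers with transition probabilities `condStep`) started at `x`. -/
def IsCondWalk {Ω : Type*} [MeasurableSpace Ω] (Pr : Measure Ω) (X : ℕ → Ω → ℤ)
    (x : ℤ) : Prop :=
  IsProbabilityMeasure Pr ∧ (∀ t, Measurable (X t)) ∧
    ∀ (t : ℕ) (γ : ℕ → ℤ), γ 0 = x →
      Pr {ω | ∀ s ≤ t, X s ω = γ s} = ∏ s ∈ Finset.range t, condStep (γ s) (γ (s + 1))

section CondWalkAux

open Filter
attribute [local instance] Classical.propDecidable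

noncomputable def bb : ℕ → ℤ → ℤ
  | 0, d => if d = 0 then 1 else 0
  | n+1, d => bb n (d-1) + bb n (d+1)

noncomputable def psum (f : ℤ → ℤ) (P : ℤ → Prop) : ℕ → ℤ → ℤ
  | 0, a => f a
  | n+1, a => (if P (a+1) then psum f P n (a+1) else 0) +
      (if P (a-1) then psum f P n (a-1) else 0)

noncomputable def esum (P G : ℤ → Prop) : ℕ → ℤ → ℝ≥0∞
  | 0, a => if G a then 1 else 0
  | n+1, a => ∑' b : ℤ, if P b then condStep a b * esum P G n b else 0

lemma psum_succ (f : ℤ → ℤ) (P : ℤ → Prop) (n : ℕ) (a : ℤ) :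
    psum f P (n+1) a = (if P (a+1) then psum f P n (a+1) else 0) +
      (if P (a-1) then psum f P n (a-1) else 0) := rfl

lemma bb_succ (n : ℕ) (d : ℤ) : bb (n+1) d = bb n (d-1) + bb n (d+1) := rfl

def P1 : ℤ → Prop := fun b => 1 ≤ b
def Pav (x : ℤ) : ℤ → Prop := fun b => 1 ≤ b ∧ b ≠ x
def Pst (x : ℤ) : ℤ → Prop := fun b => 1 ≤ b ∧ b ≤ x - 1
def idf : ℤ → ℤ := fun e => e
def onef : ℤ → ℤ := fun _ => 1
def indf (j : ℤ) : ℤ → ℤ := fun e => if e = j then 1 else 0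

lemma bb_nonneg (n : ℕ) : ∀ d, 0 ≤ bb n d := by
  induction n with
  | zero => intro d; by_cases h : d = 0 <;> simp [bb, h]
  | succ n ih => intro d; simpa [bb] using add_nonneg (ih (d-1)) (ih (d+1))

lemma bb_vanish (n : ℕ) : ∀ d, (n : ℤ) < d → bb n d = 0 := by
  induction n with
  | zero => intro d hd; simp only [bb]; rw [if_neg]; omega
  | succ n ih =>
      intro d hd
      have h1 : bb n (d-1) = 0 := ih _ (by push_cast at hd ⊢; omega)
      have h2 : bb n (d+1) = 0 := ih _ (by push_cast at hd ⊢; omega)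
      simp [bb, h1, h2]

lemma bb_sym (n : ℕ) : ∀ d, bb n (-d) = bb n d := by
  induction n with
  | zero =>
      intro d; simp only [bb]
      by_cases h : d = 0
      · simp [h]
      · rw [if_neg (by omega), if_neg h]
  | succ n ih =>
      intro d
      have e1 : -d - 1 = -(d+1) := by ring
      have e2 : -d + 1 = -(d-1) := by ring
      simp only [bb, e1, e2, ih]
      ring

lemma bb_vanish' (n : ℕ) (d : ℤ) (h : d < -(n : ℤ)) : bb n d = 0 := by
  have hs := bb_sym n (-d)
  rw [neg_neg] at hs
  rw [hs]
  exact bb_vanish n (-d) (by omega)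

lemma bb_parity (n : ℕ) : ∀ d, ¬ (2 ∣ ((n : ℤ) + d)) → bb n d = 0 := by
  induction n with
  | zero => intro d hd; simp only [bb]; rw [if_neg]; omega
  | succ n ih =>
      intro d hd
      have h1 : bb n (d-1) = 0 := ih _ (by push_cast at hd ⊢; omega)
      have h2 : bb n (d+1) = 0 := ih _ (by push_cast at hd ⊢; omega)
      simp [bb, h1, h2]

lemma bb_choose : ∀ (n k : ℕ), k ≤ n → bb n ((n : ℤ) - 2 * k) = (n.choose k : ℤ) := by
  intro n
  induction n with
  | zero => intro k hk; interval_cases k; simp [bb]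
  | succ n ih =>
      intro k hk
      rcases Nat.eq_zero_or_pos k with rfl | hkpos
      · have h1 : ((n:ℤ) + 1 - 2 * (0:ℕ) - 1) = (n:ℤ) - 2 * (0:ℕ) := by push_cast; ring
        have h2 : bb n ((n:ℤ) + 1 - 2 * (0:ℕ) + 1) = 0 := bb_vanish n _ (by push_cast; omega)
        simp only [bb, Nat.cast_succ]
        rw [h1, h2, ih 0 (Nat.zero_le n)]
        simp
      rcases Nat.lt_or_ge n.succ k with hlt | hle
      · omega
      rcases Nat.eq_or_lt_of_le hle with rfl | hk2
      · -- k = n+1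
        simp only [bb, Nat.cast_succ]
        have h1 : bb n ((n:ℤ) + 1 - 2 * ((n:ℤ)+1) - 1) = 0 := by
          apply bb_vanish'; omega
        have h2 : ((n:ℤ) + 1 - 2 * ((n:ℤ)+1) + 1) = (n:ℤ) - 2 * (n:ℕ) := by push_cast; ring
        push_cast
        rw [h1, h2, ih n le_rfl]
        simp [Nat.choose_self]
      · -- 1 ≤ k ≤ n
        have hkn : k ≤ n := by omega
        have h1 : ((n:ℤ) + 1 - 2 * k - 1) = (n:ℤ) - 2 * (k:ℕ) := by push_cast; ring
        have h2 : ((n:ℤ) + 1 - 2 * k + 1) = (n:ℤ) - 2 * ((k:ℤ) - 1) := by push_cast; ring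
        have h3 : ((n:ℤ) - 2 * ((k:ℤ) - 1)) = (n:ℤ) - 2 * ((k-1:ℕ)) := by
          push_cast [Nat.cast_sub hkpos]; ring
        simp only [bb, Nat.cast_succ]
        rw [h1, h2, h3, ih k hkn, ih (k-1) (by omega)]
        have hch : n.choose k + n.choose (k-1) = (n+1).choose k := by
          have h5 := Nat.choose_succ_succ n (k-1)
          simp only [Nat.succ_eq_add_one] at h5
          have hk1 : k - 1 + 1 = k := by omega
          rw [hk1] at h5
          omega
        push_cast [← hch]
        ring

lemma bb_le_mid (n : ℕ) (d : ℤ) : bb n d ≤ bb n 0 + bb n 1 := by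
  have main : ∀ e : ℤ, 0 ≤ e → bb n e ≤ bb n 0 + bb n 1 := by
    intro e he
    by_cases hpar : (2 : ℤ) ∣ ((n:ℤ) + e)
    · by_cases hlt : (n : ℤ) < e
      · rw [bb_vanish n e hlt]
        exact add_nonneg (bb_nonneg n 0) (bb_nonneg n 1)
      · have hk : ∃ k : ℕ, k ≤ n ∧ (n:ℤ) - 2*k = e := by
          refine ⟨((n:ℤ) - e).toNat / 2, by omega, by omega⟩
        obtain ⟨k, hkn, hke⟩ := hk
        rw [← hke, bb_choose n k hkn]
        have h2 : n.choose k ≤ n.choose (n/2) := Nat.choose_le_middle k n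
        have h3 : (n:ℤ) - 2 * ((n/2 : ℕ) : ℤ) = 0 ∨ (n:ℤ) - 2*((n/2:ℕ) : ℤ) = 1 := by omega
        have h4 := bb_choose n (n/2) (Nat.div_le_self n 2)
        rcases h3 with hm | hm
        · rw [hm] at h4
          have h5 : (n.choose k : ℤ) ≤ bb n 0 := by rw [h4]; exact_mod_cast h2
          have := bb_nonneg n 1
          omega
        · rw [hm] at h4
          have h5 : (n.choose k : ℤ) ≤ bb n 1 := by rw [h4]; exact_mod_cast h2
          have := bb_nonneg n 0
          omega
    · rw [bb_parity n e hpar]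
      exact add_nonneg (bb_nonneg n 0) (bb_nonneg n 1)
  rcases le_or_gt 0 d with hd | hd
  · exact main d hd
  · have hs := bb_sym n d
    rw [← hs]
    exact main (-d) (by omega)

lemma psum_nonneg (f : ℤ → ℤ) (P : ℤ → Prop) (hP : ∀ b, P b → 1 ≤ b)
    (hf : ∀ e, 1 ≤ e → 0 ≤ f e) : ∀ n, ∀ a, 1 ≤ a → 0 ≤ psum f P n a := by
  intro n
  induction n with
  | zero => intro a ha; exact hf a ha
  | succ n ih =>
      intro a ha
      simp only [psum]
      have h1 : 0 ≤ (if P (a+1) then psum f P n (a+1) else 0) := by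
        split_ifs with hc
        · exact ih _ (hP _ hc)
        · exact le_refl 0
      have h2 : 0 ≤ (if P (a-1) then psum f P n (a-1) else 0) := by
        split_ifs with hc
        · exact ih _ (hP _ hc)
        · exact le_refl 0
      exact add_nonneg h1 h2

lemma psum_id_P1 : ∀ n, ∀ a : ℤ, 1 ≤ a → psum idf P1 n a = a * 2 ^ n := by
  intro n
  induction n with
  | zero => intro a _; simp [psum, idf]
  | succ n ih =>
      intro a ha
      simp only [psum]
      rw [if_pos (show P1 (a+1) by unfold P1; omega)]
      rw [ih (a+1) (by omega)]
      by_cases hc : P1 (a - 1)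
      · rw [if_pos hc, ih (a-1) (by unfold P1 at hc; omega)]
        ring
      · have ha1 : a = 1 := by unfold P1 at hc; omega
        rw [if_neg hc, ha1]
        ring

lemma psum_mul (c : ℤ) (f : ℤ → ℤ) (P : ℤ → Prop) :
    ∀ n a, psum (fun e => c * f e) P n a = c * psum f P n a := by
  intro n
  induction n with
  | zero => intro a; rfl
  | succ n ih =>
      intro a
      simp only [psum, ih]
      split_ifs <;> ring

lemma cntE_eq (j : ℤ) (hj : 1 ≤ j) :
    ∀ n, ∀ a, 1 ≤ a → psum (indf j) P1 n a = bb n (j - a) - bb n (j + a) := by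
  intro n
  induction n with
  | zero =>
      intro a ha
      simp only [psum, indf, bb]
      split_ifs <;> omega
  | succ n ih =>
      intro a ha
      simp only [psum]
      rw [if_pos (show P1 (a+1) by unfold P1; omega)]
      rw [ih (a+1) (by omega)]
      by_cases hc : P1 (a - 1)
      · rw [if_pos hc, ih (a-1) (by unfold P1 at hc; omega)]
        show _ = bb (n+1) (j-a) - bb (n+1) (j+a)
        simp only [bb]
        have e1 : j - (a+1) = j - a - 1 := by ring
        have e2 : j + (a+1) = j + a + 1 := by ring
        have e3 : j - (a-1) = j - a + 1 := by ring
        have e4 : j + (a-1) = j + a - 1 := by ring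
        rw [e1, e2, e3, e4]
        ring
      · have ha1 : a = 1 := by unfold P1 at hc; omega
        rw [if_neg hc, ha1]
        show bb n (j - (1+1)) - bb n (j + (1+1)) + 0 = bb (n+1) (j-1) - bb (n+1) (j+1)
        simp only [bb]
        have e1 : j - (1+1) = j - 1 - 1 := by ring
        have e2 : j + (1+1) = j + 1 + 1 := by ring
        have e3 : j - 1 + 1 = j + 1 - 1 := by ring
        rw [e1, e2, ← e3]
        ring

lemma cnt_le_sum : ∀ (n : ℕ) (a : ℤ), 1 ≤ a →
    psum onef P1 n a ≤ ∑ i ∈ range (a.toNat + n), psum (indf ((i : ℤ) + 1)) P1 n a := by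
  intro n
  induction n with
  | zero =>
      intro a ha
      have hmem : a.toNat - 1 ∈ range (a.toNat + 0) := by
        simp only [Finset.mem_range]; omega
      have hval : psum (indf ((a.toNat - 1 : ℕ) + 1 : ℤ)) P1 0 a = 1 := by
        simp only [psum, indf]
        rw [if_pos (by omega)]
      calc psum onef P1 0 a = 1 := rfl
        _ = psum (indf ((a.toNat - 1 : ℕ) + 1 : ℤ)) P1 0 a := hval.symm
        _ ≤ _ := Finset.single_le_sum (f := fun i : ℕ => psum (indf ((i:ℤ)+1)) P1 0 a)
            (fun i _ => by simp only [psum, indf]; split_ifs <;> omega) hmem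
  | succ n ih =>
      intro a ha
      simp only [psum]
      rw [if_pos (show P1 (a+1) by unfold P1; omega)]
      have hup : psum onef P1 n (a+1) ≤
          ∑ i ∈ range (a.toNat + (n+1)), psum (indf ((i:ℤ)+1)) P1 n (a+1) := by
        have := ih (a+1) (by omega)
        have hr : (a+1).toNat + n = a.toNat + (n+1) := by omega
        rwa [hr] at this
      by_cases hc : P1 (a - 1)
      · rw [if_pos hc]
        have hdown : psum onef P1 n (a-1) ≤
            ∑ i ∈ range (a.toNat + (n+1)), psum (indf ((i:ℤ)+1)) P1 n (a-1) := by
          refine le_trans (ih (a-1) (by unfold P1 at hc; omega)) ?_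
          apply Finset.sum_le_sum_of_subset_of_nonneg
          · apply Finset.range_subset_range.2; omega
          · intro i _ _
            exact psum_nonneg _ _ (fun b hb => hb) (fun e _ => by simp only [indf]; split_ifs <;> omega)
              n (a-1) (by unfold P1 at hc; omega)
        refine le_trans (add_le_add hup hdown) ?_
        rw [← Finset.sum_add_distrib]
        apply le_of_eq
        apply Finset.sum_congr rfl
        intro i _
        rw [if_pos (show P1 (a+1) by unfold P1; omega), if_pos hc]
      · rw [if_neg hc, add_zero]
        refine le_trans hup ?_
        apply Finset.sum_le_sum
        intro i _
        rw [if_pos (show P1 (a+1) by unfold P1; omega), if_neg hc, add_zero]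

lemma sum_tele (n : ℕ) (M : ℕ) :
    ∑ i ∈ range M, psum (indf ((i : ℤ) + 1)) P1 n 1 ≤ bb n 0 + bb n 1 := by
  have hterm : ∀ i : ℕ, psum (indf ((i:ℤ)+1)) P1 n 1 = bb n (i:ℤ) - bb n ((i:ℤ)+2) := by
    intro i
    rw [cntE_eq ((i:ℤ)+1) (by omega) n 1 le_rfl]
    congr 1 <;> congr 1 <;> ring
  set g : ℕ → ℤ := fun i => bb n (i:ℤ) with hg
  set g2 : ℕ → ℤ := fun i => bb n ((i:ℤ)+1) with hg2
  have hterm2 : ∀ i : ℕ, psum (indf ((i:ℤ)+1)) P1 n 1 = (g i - g (i+1)) + (g2 i - g2 (i+1)) := by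
    intro i
    rw [hterm i]
    simp only [hg, hg2]
    push_cast
    ring
  rw [Finset.sum_congr rfl (fun i _ => hterm2 i), Finset.sum_add_distrib,
    Finset.sum_range_sub' g M, Finset.sum_range_sub' g2 M]
  have h1 : 0 ≤ g M := bb_nonneg n (M:ℤ)
  have h2 : 0 ≤ g2 M := bb_nonneg n ((M:ℤ)+1)
  have h3 : g 0 = bb n 0 := by simp [hg]
  have h4 : g2 0 = bb n 1 := by simp [hg2]
  omega

section WithX
variable (x : ℤ) (hx : 1 ≤ x)

lemma upshift (hx : 1 ≤ x) : ∀ n, ∀ a, x + 1 ≤ a →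
    psum idf (Pav x) n a = psum idf P1 n (a - x) + x * psum onef P1 n (a - x) := by
  intro n
  induction n with
  | zero => intro a ha; simp only [psum, idf, onef]; ring
  | succ n ih =>
      intro a ha
      rw [psum_succ, psum_succ, psum_succ]
      have hup : Pav x (a+1) := by unfold Pav; omega
      have hup1 : P1 (a - x + 1) := by unfold P1; omega
      rw [if_pos hup, if_pos hup1, if_pos hup1]
      have e1 : a + 1 - x = a - x + 1 := by ring
      rw [ih (a+1) (by omega), e1]
      by_cases hd : Pav x (a - 1)
      · have hd1 : P1 (a - x - 1) := by unfold Pav at hd; unfold P1; omega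
        rw [if_pos hd, if_pos hd1, if_pos hd1]
        have e2 : a - 1 - x = a - x - 1 := by ring
        rw [ih (a-1) (by unfold Pav at hd; omega), e2]
        ring
      · have hd1 : ¬ P1 (a - x - 1) := by unfold Pav at hd; unfold P1; omega
        rw [if_neg hd, if_neg hd1, if_neg hd1]
        ring

lemma stripmatch (hx : 1 ≤ x) : ∀ n, ∀ a, 1 ≤ a → a ≤ x - 1 →
    psum idf (Pav x) n a = psum idf (Pst x) n a := by
  intro n
  induction n with
  | zero => intro a _ _; rfl
  | succ n ih =>
      intro a ha1 ha2
      rw [psum_succ, psum_succ]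
      have hiff1 : Pav x (a+1) ↔ Pst x (a+1) := by unfold Pav Pst; omega
      have hiff2 : Pav x (a-1) ↔ Pst x (a-1) := by unfold Pav Pst; omega
      by_cases hu : Pav x (a+1)
      · rw [if_pos hu, if_pos (hiff1.1 hu), ih (a+1) (by unfold Pav at hu; omega) (by unfold Pav at hu; omega)]
        by_cases hd : Pav x (a-1)
        · rw [if_pos hd, if_pos (hiff2.1 hd), ih (a-1) (by unfold Pav at hd; omega) (by unfold Pav at hd; omega)]
        · rw [if_neg hd, if_neg (fun hc => hd (hiff2.2 hc))]
      · rw [if_neg hu, if_neg (fun hc => hu (hiff1.2 hc))]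
        by_cases hd : Pav x (a-1)
        · rw [if_pos hd, if_pos (hiff2.1 hd), ih (a-1) (by unfold Pav at hd; omega) (by unfold Pav at hd; omega)]
        · rw [if_neg hd, if_neg (fun hc => hd (hiff2.2 hc))]

lemma strip_le (hx : 1 ≤ x) : ∀ n, ∀ a, 1 ≤ a → a ≤ x - 1 →
    psum idf (Pst x) n a ≤ (x - 1) * psum onef (Pst x) n a := by
  intro n
  induction n with
  | zero => intro a h1 h2; simp only [psum, idf, onef]; omega
  | succ n ih =>
      intro a h1 h2
      rw [psum_succ, psum_succ, mul_add]
      apply add_le_add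
      · by_cases hu : Pst x (a+1)
        · rw [if_pos hu, if_pos hu]
          exact ih (a+1) (by unfold Pst at hu; omega) (by unfold Pst at hu; omega)
        · rw [if_neg hu, if_neg hu]; simp
      · by_cases hd : Pst x (a-1)
        · rw [if_pos hd, if_pos hd]
          exact ih (a-1) (by unfold Pst at hd; omega) (by unfold Pst at hd; omega)
        · rw [if_neg hd, if_neg hd]; simp

lemma stripcnt_le (hx : 1 ≤ x) : ∀ n, ∀ a, 1 ≤ a → a ≤ x - 1 →
    psum onef (Pst x) n a ≤ ∑ i ∈ range (x-1).toNat, psum (indf ((i : ℤ) + 1)) P1 n a := by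
  intro n
  induction n with
  | zero =>
      intro a h1 h2
      have hmem : a.toNat - 1 ∈ range (x-1).toNat := by
        simp only [Finset.mem_range]; omega
      have hval : psum (indf ((a.toNat - 1 : ℕ) + 1 : ℤ)) P1 0 a = 1 := by
        simp only [psum, indf]
        rw [if_pos (by omega)]
      calc psum onef (Pst x) 0 a = 1 := rfl
        _ = psum (indf ((a.toNat - 1 : ℕ) + 1 : ℤ)) P1 0 a := hval.symm
        _ ≤ _ := Finset.single_le_sum (f := fun i : ℕ => psum (indf ((i:ℤ)+1)) P1 0 a)
            (fun i _ => by simp only [psum, indf]; split_ifs <;> omega) hmem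
  | succ n ih =>
      intro a h1 h2
      rw [psum_succ]
      have key : ∀ c : ℤ, Pst x c → 1 ≤ c ∧ c ≤ x - 1 := fun c hc => hc
      have hsum : ∀ c : ℤ, 1 ≤ c → c ≤ x - 1 →
          psum onef (Pst x) n c ≤ ∑ i ∈ range (x-1).toNat, psum (indf ((i:ℤ)+1)) P1 n c :=
        fun c hc1 hc2 => ih c hc1 hc2
      have goalsum : ∑ i ∈ range (x-1).toNat, psum (indf ((i:ℤ)+1)) P1 (n+1) a =
          ∑ i ∈ range (x-1).toNat, ((if P1 (a+1) then psum (indf ((i:ℤ)+1)) P1 n (a+1) else 0)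
            + (if P1 (a-1) then psum (indf ((i:ℤ)+1)) P1 n (a-1) else 0)) := by
        apply Finset.sum_congr rfl
        intro i _
        rw [psum_succ]
      rw [goalsum, Finset.sum_add_distrib]
      apply add_le_add
      · by_cases hu : Pst x (a+1)
        · rw [if_pos hu]
          have h3 := hsum (a+1) (key _ hu).1 (key _ hu).2
          refine le_trans h3 (le_of_eq ?_)
          apply Finset.sum_congr rfl
          intro i _
          rw [if_pos (show P1 (a+1) by unfold P1; omega)]
        · rw [if_neg hu]
          apply Finset.sum_nonneg
          intro i _
          split_ifs with hp
          · exact psum_nonneg _ _ (fun b hb => hb)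
              (fun e _ => by simp only [indf]; split_ifs <;> omega) n (a+1) (by unfold P1 at hp; omega)
          · exact le_refl 0
      · by_cases hd : Pst x (a-1)
        · rw [if_pos hd]
          have h3 := hsum (a-1) (key _ hd).1 (key _ hd).2
          refine le_trans h3 (le_of_eq ?_)
          apply Finset.sum_congr rfl
          intro i _
          rw [if_pos (show P1 (a-1) by unfold Pst at hd; unfold P1; omega)]
        · rw [if_neg hd]
          apply Finset.sum_nonneg
          intro i _
          split_ifs with hp
          · exact psum_nonneg _ _ (fun b hb => hb)
              (fun e _ => by simp only [indf]; split_ifs <;> omega) n (a-1) (by unfold P1 at hp; omega)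
          · exact le_refl 0

/-- Splitting the avoidance sum at the first step. -/
lemma av_split (hx : 1 ≤ x) (n : ℕ) :
    psum idf (Pav x) (n+1) x = (psum idf P1 n 1 + x * psum onef P1 n 1) +
      (if 1 ≤ x - 1 then psum idf (Pst x) n (x-1) else 0) := by
  rw [psum_succ]
  have hup : Pav x (x+1) := by unfold Pav; omega
  rw [if_pos hup, upshift x hx n (x+1) (by omega)]
  have e1 : x + 1 - x = 1 := by ring
  rw [e1]
  congr 1
  by_cases hd : Pav x (x-1)
  · rw [if_pos hd, if_pos (show 1 ≤ x - 1 by unfold Pav at hd; omega)]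
    exact stripmatch x hx n (x-1) (by unfold Pav at hd; omega) le_rfl
  · rw [if_neg hd, if_neg (show ¬ 1 ≤ x - 1 by unfold Pav at hd; omega)]

/-- Lower bound for the avoidance sum. -/
lemma av_lower (hx : 1 ≤ x) (n : ℕ) : 2 ^ n ≤ psum idf (Pav x) (n+1) x := by
  rw [av_split x hx n, psum_id_P1 n 1 le_rfl, one_mul]
  have h1 : 0 ≤ x * psum onef P1 n 1 :=
    mul_nonneg (by omega) (psum_nonneg _ _ (fun b hb => hb) (fun e _ => by simp [onef]) n 1 le_rfl)
  have h2 : 0 ≤ (if 1 ≤ x - 1 then psum idf (Pst x) n (x-1) else 0) := by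
    split_ifs with hc
    · exact psum_nonneg _ _ (fun b hb => hb.1) (fun e he => by simp only [idf]; omega) n (x-1) hc
    · exact le_refl 0
  omega

/-- Upper bound for the avoidance sum. -/
lemma av_upper (hx : 1 ≤ x) (n : ℕ) :
    psum idf (Pav x) (n+1) x ≤ 2 ^ n + (x + x^2) * (bb n 0 + bb n 1) := by
  rw [av_split x hx n, psum_id_P1 n 1 le_rfl, one_mul]
  have hN : psum onef P1 n 1 ≤ bb n 0 + bb n 1 :=
    le_trans (cnt_le_sum n 1 le_rfl) (by simpa using sum_tele n ((1:ℤ).toNat + n))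
  have hstrip : (if 1 ≤ x - 1 then psum idf (Pst x) n (x-1) else 0) ≤
      x^2 * (bb n 0 + bb n 1) := by
    have hmid : 0 ≤ bb n 0 + bb n 1 := add_nonneg (bb_nonneg n 0) (bb_nonneg n 1)
    split_ifs with hc
    · have h1 := strip_le x hx n (x-1) hc le_rfl
      have h2 := stripcnt_le x hx n (x-1) hc le_rfl
      have h3 : ∑ i ∈ range (x-1).toNat, psum (indf ((i:ℤ)+1)) P1 n (x-1) ≤
          (x-1) * (bb n 0 + bb n 1) := by
        have hterm : ∀ i : ℕ, psum (indf ((i:ℤ)+1)) P1 n (x-1) ≤ bb n 0 + bb n 1 := by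
          intro i
          rw [cntE_eq ((i:ℤ)+1) (by omega) n (x-1) hc]
          have h5 := bb_le_mid n ((i:ℤ)+1 - (x-1))
          have h6 := bb_nonneg n ((i:ℤ)+1+(x-1))
          omega
        calc ∑ i ∈ range (x-1).toNat, psum (indf ((i:ℤ)+1)) P1 n (x-1)
            ≤ ∑ _i ∈ range (x-1).toNat, (bb n 0 + bb n 1) := Finset.sum_le_sum (fun i _ => hterm i)
          _ = ((x-1).toNat : ℤ) * (bb n 0 + bb n 1) := by
              rw [Finset.sum_const, Finset.card_range]; push_cast; ring
          _ ≤ (x-1) * (bb n 0 + bb n 1) := by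
              apply mul_le_mul_of_nonneg_right _ hmid
              omega
        
      calc psum idf (Pst x) n (x-1) ≤ (x-1) * psum onef (Pst x) n (x-1) := h1
        _ ≤ (x-1) * ((x-1) * (bb n 0 + bb n 1)) := by
            apply mul_le_mul_of_nonneg_left (le_trans h2 h3) (by omega)
        _ ≤ x^2 * (bb n 0 + bb n 1) := by nlinarith [hmid]
    · positivity
  have hx2 : x * psum onef P1 n 1 ≤ x * (bb n 0 + bb n 1) :=
    mul_le_mul_of_nonneg_left hN (by omega)
  nlinarith [hstrip, hx2]

end WithX

lemma condStep_up (a : ℤ) : condStep a (a+1) = ENNReal.ofReal (((a:ℝ)+1)/(2*a)) := by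
  simp only [condStep, if_pos rfl]
  norm_num

lemma condStep_down (a : ℤ) : condStep a (a-1) = ENNReal.ofReal (((a:ℝ)-1)/(2*a)) := by
  simp only [condStep]
  rw [if_neg (by omega)]
  norm_num

lemma condStep_zero (a v : ℤ) (h1 : v ≠ a+1) (h2 : v ≠ a-1) : condStep a v = 0 := by
  simp only [condStep]
  rw [if_neg h1, if_neg h2]
  simp

lemma esum_zero (P G : ℤ → Prop) (a : ℤ) : esum P G 0 a = if G a then 1 else 0 := rfl

lemma esum_succ (P G : ℤ → Prop) (n : ℕ) (a : ℤ) :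
    esum P G (n+1) a = (if P (a+1) then condStep a (a+1) * esum P G n (a+1) else 0) +
      (if P (a-1) then condStep a (a-1) * esum P G n (a-1) else 0) := by
  have huneq : (a : ℤ) + 1 ≠ a - 1 := by omega
  have : esum P G (n+1) a = ∑' b : ℤ, if P b then condStep a b * esum P G n b else 0 := rfl
  rw [this]
  rw [tsum_eq_sum (s := ({a+1, a-1} : Finset ℤ))
    (by
      intro b hb
      simp only [Finset.mem_insert, Finset.mem_singleton] at hb
      push_neg at hb
      split_ifs with hp
      · rw [condStep_zero a b hb.1 hb.2, zero_mul]
      · rfl)]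
  rw [Finset.sum_insert (by simp only [Finset.mem_singleton]; exact huneq)]
  rw [Finset.sum_singleton]

lemma psum_nonneg' (P : ℤ → Prop) (G : ℤ → Prop) (hP : ∀ b, P b → 1 ≤ b) :
    ∀ n a, 1 ≤ a → 0 ≤ psum (fun e => if G e then e else 0) P n a :=
  psum_nonneg _ P hP (fun e he => by split_ifs <;> omega)

/-- The bridge between `esum` and `psum`. -/
lemma esum_eq (P G : ℤ → Prop) (hP : ∀ b, P b → 1 ≤ b) :
    ∀ n, ∀ a, 1 ≤ a → esum P G n a =
      ENNReal.ofReal ((psum (fun e => if G e then e else 0) P n a : ℝ) / ((a : ℝ) * 2 ^ n)) := by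
  intro n
  induction n with
  | zero =>
      intro a ha
      rw [esum_zero]
      simp only [psum]
      have haR : (0:ℝ) < (a:ℝ) := by exact_mod_cast ha
      split_ifs with hg
      · push_cast
        rw [pow_zero, mul_one, div_self (ne_of_gt haR)]
        simp
      · simp
  | succ n ih =>
      intro a ha
      rw [esum_succ]
      have haR : (0:ℝ) < (a:ℝ) := by exact_mod_cast (show (0:ℤ) < a by omega)
      set f : ℤ → ℤ := fun e => if G e then e else 0 with hf
      have hup : (if P (a+1) then condStep a (a+1) * esum P G n (a+1) else 0) =
          ENNReal.ofReal ((if P (a+1) then (psum f P n (a+1) : ℝ) else 0) / ((a:ℝ) * 2 ^ (n+1))) := by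
        split_ifs with hp
        · rw [condStep_up, ih (a+1) (by omega)]
          rw [← ENNReal.ofReal_mul (by positivity)]
          congr 1
          have ha1 : ((a:ℝ)+1) ≠ 0 := by positivity
          field_simp
          push_cast
          ring
        · simp
      have hdown : (if P (a-1) then condStep a (a-1) * esum P G n (a-1) else 0) =
          ENNReal.ofReal ((if P (a-1) then (psum f P n (a-1) : ℝ) else 0) / ((a:ℝ) * 2 ^ (n+1))) := by
        split_ifs with hp
        · have ha2 : 1 ≤ a - 1 := hP _ hp
          rw [condStep_down, ih (a-1) ha2]
          rw [← ENNReal.ofReal_mul (by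
            apply div_nonneg _ (by positivity)
            have : (1:ℝ) ≤ (a:ℝ) - 1 := by exact_mod_cast ha2
            linarith)]
          congr 1
          have ha1 : ((a:ℝ) - 1) ≠ 0 := by
            have : (1:ℝ) ≤ (a:ℝ) - 1 := by exact_mod_cast ha2
            linarith
          field_simp
          push_cast
          ring
        · simp
      rw [hup, hdown, ← ENNReal.ofReal_add]
      · congr 1
        rw [← add_div]
        congr 1
        rw [psum_succ]
        push_cast
        split_ifs with h1 h2 h2 <;> push_cast <;> ring
      · apply div_nonneg _ (by positivity)
        split_ifs with hp
        · exact_mod_cast psum_nonneg' P G hP n (a+1) (by omega)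
        · exact le_refl 0
      · apply div_nonneg _ (by positivity)
        split_ifs with hp
        · exact_mod_cast psum_nonneg' P G hP n (a-1) (hP _ hp)
        · exact le_refl 0

noncomputable def pathOf (a : ℤ) {T : ℕ} (v : Fin T → ℤ) : ℕ → ℤ := fun s =>
  if _h : s = 0 then a else if h' : s - 1 < T then v ⟨s - 1, h'⟩ else 0

lemma pathOf_zero (a : ℤ) {T : ℕ} (v : Fin T → ℤ) : pathOf a v 0 = a := rfl

lemma pathOf_succ (a : ℤ) {T : ℕ} (v : Fin T → ℤ) (s : ℕ) :
    pathOf a v (s+1) = if h' : s < T then v ⟨s, h'⟩ else 0 := by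
  simp [pathOf]

lemma pathOf_fin (a : ℤ) {T : ℕ} (v : Fin T → ℤ) (i : Fin T) :
    pathOf a v ((i : ℕ) + 1) = v i := by
  rw [pathOf_succ, dif_pos i.isLt]

lemma pathOf_cons (a b : ℤ) {T : ℕ} (w : Fin T → ℤ) (s : ℕ) :
    pathOf a (Fin.cons b w : Fin (T+1) → ℤ) (s+1) = pathOf b w s := by
  cases s with
  | zero =>
      rw [pathOf_succ, dif_pos (Nat.succ_pos T)]
      rfl
  | succ s =>
      rw [pathOf_succ, pathOf_succ]
      by_cases h' : s < T
      · rw [dif_pos (show s + 1 < T + 1 by omega), dif_pos h']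
        exact Fin.cons_succ (α := fun _ : Fin (T+1) => ℤ) b w ⟨s, h'⟩
      · rw [dif_neg (by omega), dif_neg h']

lemma tsum_paths (P G : ℤ → Prop) :
    ∀ (T : ℕ) (a : ℤ),
      (∑' v : Fin T → ℤ, if (∀ i, P (v i)) ∧ G (pathOf a v T) then
        ∏ s ∈ Finset.range T, condStep (pathOf a v s) (pathOf a v (s+1)) else 0) = esum P G T a := by
  intro T
  induction T with
  | zero =>
      intro a
      rw [tsum_eq_single (Fin.elim0 : Fin 0 → ℤ)
        (fun b hb => absurd (Subsingleton.elim b _) hb)]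
      rw [esum_zero]
      simp only [Finset.range_zero, Finset.prod_empty]
      have hiff : ((∀ i : Fin 0, P (Fin.elim0 i)) ∧ G (pathOf a (Fin.elim0 : Fin 0 → ℤ) 0)) ↔ G a :=
        ⟨fun hh => hh.2, fun hg => ⟨fun i => i.elim0, hg⟩⟩
      rw [if_congr hiff rfl rfl]
  | succ T ih =>
      intro a
      set F : (Fin (T+1) → ℤ) → ℝ≥0∞ := fun v =>
        if (∀ i, P (v i)) ∧ G (pathOf a v (T+1)) then
          ∏ s ∈ Finset.range (T+1), condStep (pathOf a v s) (pathOf a v (s+1)) else 0 with hF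
      have h1 : ∑' v : Fin (T+1) → ℤ, F v = ∑' p : ℤ × (Fin T → ℤ), F (Fin.cons p.1 p.2) := by
        rw [← Equiv.tsum_eq (Fin.consEquiv (fun _ : Fin (T+1) => ℤ)) F]
        rfl
      have h2 : esum P G (T+1) a = ∑' b : ℤ, if P b then condStep a b * esum P G T b else 0 := rfl
      rw [h1, ENNReal.tsum_prod (f := fun b (w : Fin T → ℤ) => F (Fin.cons b w)), h2]
      apply tsum_congr
      intro b
      have key : ∀ w : Fin T → ℤ, F (Fin.cons b w) =
          if P b then condStep a b * (if (∀ i, P (w i)) ∧ G (pathOf b w T) then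
            ∏ s ∈ Finset.range T, condStep (pathOf b w s) (pathOf b w (s+1)) else 0) else 0 := by
        intro w
        simp only [hF]
        have hc : ((∀ i, P ((Fin.cons b w : Fin (T+1) → ℤ) i)) ∧ G (pathOf a (Fin.cons b w) (T+1)))
            ↔ (P b ∧ ((∀ i, P (w i)) ∧ G (pathOf b w T))) := by
          rw [pathOf_cons]
          constructor
          · rintro ⟨hall, hg⟩
            refine ⟨?_, fun i => ?_, hg⟩
            · have := hall 0
              rwa [Fin.cons_zero] at this
            · have := hall i.succ
              rwa [Fin.cons_succ] at this
          · rintro ⟨hb, hall, hg⟩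
            refine ⟨fun i => ?_, hg⟩
            refine Fin.cases ?_ ?_ i
            · rwa [Fin.cons_zero]
            · intro j
              rw [Fin.cons_succ]
              exact hall j
        have hprod : ∏ s ∈ Finset.range (T+1), condStep (pathOf a (Fin.cons b w) s)
              (pathOf a (Fin.cons b w) (s+1))
            = condStep a b * ∏ s ∈ Finset.range T, condStep (pathOf b w s) (pathOf b w (s+1)) := by
          rw [Finset.prod_range_succ']
          rw [mul_comm]
          congr 1
          · apply Finset.prod_congr rfl
            intro s _
            rw [pathOf_cons, pathOf_cons]
        rw [if_congr hc hprod rfl]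
        by_cases hb : P b
        · by_cases hq : (∀ i, P (w i)) ∧ G (pathOf b w T)
          · rw [if_pos ⟨hb, hq⟩, if_pos hb, if_pos hq]
          · rw [if_neg (fun hh => hq hh.2), if_pos hb, if_neg hq, mul_zero]
        · rw [if_neg (fun hh => hb hh.1), if_neg hb]
      rw [tsum_congr key]
      by_cases hb : P b
      · rw [if_pos hb]
        simp only [if_pos hb]
        rw [ENNReal.tsum_mul_left, ih b]
      · simp only [if_neg hb]
        exact tsum_zero

lemma meas_event {Ω : Type*} [MeasurableSpace Ω] (Pr : Measure Ω) (X : ℕ → Ω → ℤ) (x : ℤ)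
    (h : IsCondWalk Pr X x) (P G : ℤ → Prop) (T : ℕ) :
    Pr {ω | X 0 ω = x ∧ (∀ s, 1 ≤ s → s ≤ T → P (X s ω)) ∧ G (X T ω)} = esum P G T x := by
  obtain ⟨hprob, hmeas, hcyl⟩ := h
  set I : Set (Fin T → ℤ) := {v | (∀ i, P (v i)) ∧ G (pathOf x v T)} with hI
  set Cyl : (Fin T → ℤ) → Set Ω := fun v => {ω | ∀ s ≤ T, X s ω = pathOf x v s} with hC
  have hpfT : ∀ (v : Fin T → ℤ) (ω : Ω), (∀ s ≤ T, X s ω = pathOf x v s) → X T ω = pathOf x v T :=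
    fun v ω hω => hω T le_rfl
  have hEq : {ω | X 0 ω = x ∧ (∀ s, 1 ≤ s → s ≤ T → P (X s ω)) ∧ G (X T ω)}
      = ⋃ (v : I), Cyl v := by
    ext ω
    simp only [Set.mem_setOf_eq, Set.mem_iUnion]
    constructor
    · rintro ⟨h0, hP, hG⟩
      set v : Fin T → ℤ := fun i => X ((i : ℕ) + 1) ω with hv
      have hmemCyl : ∀ s ≤ T, X s ω = pathOf x v s := by
        intro s hs
        cases s with
        | zero => rw [pathOf_zero]; exact h0
        | succ s => rw [pathOf_succ, dif_pos (show s < T by omega)]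
      have hXT : X T ω = pathOf x v T := hpfT v ω hmemCyl
      refine ⟨⟨v, ⟨fun i => ?_, ?_⟩⟩, hmemCyl⟩
      · exact hP ((i : ℕ) + 1) (by omega) (by have := i.isLt; omega)
      · rw [← hXT]; exact hG
    · rintro ⟨⟨v, ⟨hvP, hvG⟩⟩, hω⟩
      refine ⟨by rw [hω 0 (Nat.zero_le T)]; rfl, fun s h1 h2 => ?_, ?_⟩
      · rw [hω s h2]
        cases s with
        | zero => omega
        | succ s =>
            rw [pathOf_succ, dif_pos (show s < T by omega)]
            exact hvP ⟨s, by omega⟩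
      · rw [hpfT v ω hω]
        exact hvG
  have hCylMeas : ∀ v : Fin T → ℤ, MeasurableSet (Cyl v) := by
    intro v
    have : Cyl v = ⋂ (s : ℕ) (_ : s ≤ T), (X s) ⁻¹' {pathOf x v s} := by
      ext ω
      simp [hC, Set.mem_iInter]
    rw [this]
    exact MeasurableSet.biInter (Set.to_countable _)
      (fun s _ => hmeas s (measurableSet_singleton _))
  have hDisj : Pairwise (Function.onFun Disjoint fun v : I => Cyl v) := by
    intro v w hvw
    have hne : (v : Fin T → ℤ) ≠ w := fun hc => hvw (Subtype.ext hc)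
    obtain ⟨i, hi⟩ := Function.ne_iff.1 hne
    rw [Function.onFun]
    apply Set.disjoint_left.2
    intro ω hv hw
    apply hi
    have h1 := hv ((i : ℕ) + 1) (by have := i.isLt; omega)
    have h2 := hw ((i : ℕ) + 1) (by have := i.isLt; omega)
    rw [pathOf_fin] at h1 h2
    rw [← h1, ← h2]
  rw [hEq, measure_iUnion hDisj (fun v => hCylMeas v)]
  have hPrCyl : ∀ v : Fin T → ℤ, Pr (Cyl v) =
      ∏ s ∈ Finset.range T, condStep (pathOf x v s) (pathOf x v (s+1)) :=
    fun v => hcyl T (pathOf x v) (pathOf_zero x v)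
  calc ∑' (v : I), Pr (Cyl v)
      = ∑' (v : I), (fun v : Fin T → ℤ =>
          ∏ s ∈ Finset.range T, condStep (pathOf x v s) (pathOf x v (s+1))) v := by
        apply tsum_congr; intro v; exact hPrCyl v
    _ = ∑' (v : Fin T → ℤ), Set.indicator I (fun v =>
          ∏ s ∈ Finset.range T, condStep (pathOf x v s) (pathOf x v (s+1))) v :=
        _root_.tsum_subtype I (fun v : Fin T → ℤ =>
          ∏ s ∈ Finset.range T, condStep (pathOf x v s) (pathOf x v (s+1)))
    _ = esum P G T x := by
        rw [← tsum_paths P G T x]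
        apply tsum_congr
        intro v
        rw [Set.indicator_apply]
        have : v ∈ I ↔ ((∀ i, P (v i)) ∧ G (pathOf x v T)) := Iff.rfl
        rw [if_congr this rfl rfl]

lemma psum_congr (f g : ℤ → ℤ) (P : ℤ → Prop) (hfg : ∀ e, f e = g e) :
    ∀ n a, psum f P n a = psum g P n a := by
  intro n
  induction n with
  | zero => intro a; exact hfg a
  | succ n ih =>
      intro a
      rw [psum_succ, psum_succ, ih (a+1), ih (a-1)]

noncomputable def creal (m : ℕ) : ℝ := (Nat.centralBinom m : ℝ) / 4 ^ m

lemma creal_nonneg (m : ℕ) : 0 ≤ creal m := by unfold creal; positivity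

lemma creal_zero : creal 0 = 1 := by
  unfold creal Nat.centralBinom
  norm_num

lemma creal_succ (m : ℕ) : creal (m+1) = creal m * ((2*m+1) / (2*m+2)) := by
  have h := Nat.succ_mul_centralBinom_succ m
  have hcast : ((m:ℝ)+1) * (Nat.centralBinom (m+1) : ℝ)
      = 2*(2*(m:ℝ)+1) * (Nat.centralBinom m : ℝ) := by exact_mod_cast h
  unfold creal
  have h4 : (0:ℝ) < 4 ^ m := by positivity
  have hm1 : ((m:ℝ)+1) ≠ 0 := by positivity
  field_simp
  linear_combination (4 ^ m * 2) * hcast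

lemma creal_sq (m : ℕ) : creal m ^ 2 * (2*m+1) ≤ 1 := by
  induction m with
  | zero => simp [creal_zero]
  | succ m ih =>
      have hpos : (0:ℝ) < 2*(m:ℝ)+2 := by positivity
      have hexp : creal (m+1) ^ 2 * (2*(m+1:ℕ)+1) =
          (creal m ^ 2 * (2*m+1)) * ((2*(m:ℝ)+1) * (2*m+3) / (2*m+2)^2) := by
        rw [creal_succ]
        push_cast
        field_simp
        ring
      rw [hexp]
      have h1 : (2*(m:ℝ)+1) * (2*m+3) / (2*m+2)^2 ≤ 1 := by
        rw [div_le_one (by positivity)]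
        nlinarith
      have h2 : 0 ≤ (2*(m:ℝ)+1) * (2*m+3) / (2*m+2)^2 := by positivity
      nlinarith [sq_nonneg (creal m), ih]

lemma creal_le (m : ℕ) : creal m ≤ Real.sqrt (1/(2*m+1)) := by
  have h2 : creal m ^ 2 ≤ 1/(2*(m:ℝ)+1) := by
    have := creal_sq m
    rw [le_div_iff₀ (by positivity)]
    push_cast at this ⊢
    linarith
  have h3 := Real.sqrt_le_sqrt h2
  rwa [Real.sqrt_sq (creal_nonneg m)] at h3

lemma creal_tendsto : Filter.Tendsto creal Filter.atTop (nhds 0) := by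
  have hsq : Filter.Tendsto (fun m : ℕ => Real.sqrt (1/(2*m+1))) Filter.atTop (nhds 0) := by
    have h1 : Filter.Tendsto (fun m : ℕ => (1:ℝ)/(2*m+1)) Filter.atTop (nhds 0) := by
      apply Filter.Tendsto.div_atTop (tendsto_const_nhds)
      apply Filter.tendsto_atTop_add_const_right
      apply Filter.Tendsto.const_mul_atTop (by norm_num : (0:ℝ) < 2)
      exact tendsto_natCast_atTop_atTop
    have h2 := (Real.continuous_sqrt.tendsto 0).comp h1
    have h3 : Real.sqrt 0 = 0 := Real.sqrt_zero
    rw [← h3]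
    exact h2
  exact tendsto_of_tendsto_of_tendsto_of_le_of_le tendsto_const_nhds hsq
    (fun m => creal_nonneg m) (fun m => creal_le m)

lemma bb_two_m_zero (m : ℕ) : bb (2*m) 0 = (Nat.centralBinom m : ℤ) := by
  have h := bb_choose (2*m) m (by omega)
  have he : ((2*m:ℕ):ℤ) - 2*(m:ℕ) = 0 := by push_cast; ring
  rw [he] at h
  rw [h]
  rfl

lemma Nbar_le (T : ℕ) : ((bb T 0 + bb T 1 : ℤ) : ℝ) ≤ 2 * creal (T/2) * 2 ^ T := by
  have h4eq : ∀ m : ℕ, (4:ℝ)^m = 2^(2*m) := by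
    intro m
    rw [show (4:ℝ) = 2^2 by norm_num, ← pow_mul]
  have hcb : ∀ m : ℕ, (Nat.centralBinom m : ℝ) = creal m * 2^(2*m) := by
    intro m
    unfold creal
    rw [h4eq m]
    field_simp
  rcases Nat.even_or_odd T with ⟨m, hm⟩ | ⟨m, hm⟩
  · -- T = 2m
    subst hm
    have hT2 : (m + m) = 2*m := by ring
    rw [hT2]
    have h0 : bb (2*m) 0 = (Nat.centralBinom m : ℤ) := bb_two_m_zero m
    have h1 : bb (2*m) 1 = 0 := by
      apply bb_parity
      push_cast
      omega
    have hdiv : (2*m)/2 = m := by omega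
    rw [h0, h1, hdiv, add_zero]
    push_cast
    rw [hcb m]
    have := creal_nonneg m
    nlinarith [pow_pos (show (0:ℝ) < 2 by norm_num) (2*m)]
  · -- T = 2m+1
    subst hm
    have h0 : bb (2*m+1) 0 = 0 := by
      apply bb_parity
      push_cast
      omega
    have h1 : bb (2*m+1) 1 = ((2*m+1).choose m : ℤ) := by
      have h := bb_choose (2*m+1) m (by omega)
      have he : ((2*m+1:ℕ):ℤ) - 2*(m:ℕ) = 1 := by push_cast; ring
      rw [he] at h
      exact h
    have hch : (2*m+1).choose m ≤ 2 * Nat.centralBinom m := by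
      rcases Nat.eq_zero_or_pos m with rfl | hmpos
      · simp [Nat.centralBinom]
      · have hp : (2*m+1).choose m = (2*m).choose (m-1) + (2*m).choose m := by
          cases m with
          | zero => omega
          | succ mm =>
              simpa [Nat.succ_eq_add_one] using Nat.choose_succ_succ (2*(mm+1)) mm
        have hle1 : (2*m).choose (m-1) ≤ Nat.centralBinom m := Nat.choose_le_centralBinom _ m
        have hle2 : (2*m).choose m ≤ Nat.centralBinom m := Nat.choose_le_centralBinom _ m
        omega
    have hdiv : (2*m+1)/2 = m := by omega
    rw [h0, h1, hdiv, zero_add]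
    have hcast : ((2*m+1).choose m : ℝ) ≤ 2 * (Nat.centralBinom m : ℝ) := by exact_mod_cast hch
    rw [hcb m] at hcast
    have hpow : (2:ℝ)^(2*m) ≤ 2^(2*m+1) := by
      apply pow_le_pow_right₀ (by norm_num)
      omega
    have := creal_nonneg m
    push_cast
    calc ((2*m+1).choose m : ℝ) ≤ 2 * (creal m * 2^(2*m)) := hcast
      _ ≤ 2 * creal m * 2^(2*m+1) := by nlinarith
 
lemma choose_diff (m : ℕ) (hm : 1 ≤ m) :
    ∀ d : ℕ, (Nat.centralBinom m : ℝ) - ((2*m).choose (m - d) : ℝ)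
      ≤ (Nat.centralBinom m : ℝ) * d^2 / m := by
  have hcb0 : (Nat.centralBinom m : ℝ) = ((2*m).choose m : ℝ) := by norm_cast
  have hmR : (0:ℝ) < m := by exact_mod_cast hm
  intro d
  induction d with
  | zero =>
      simp only [Nat.sub_zero, ← hcb0]
      norm_num
  | succ d ih =>
      rw [le_div_iff₀ hmR]
      rcases le_or_gt m d with hd | hd
      · -- m ≤ d : crude bound
        have h1 : (1:ℝ) ≤ Nat.centralBinom m := by
          exact_mod_cast Nat.centralBinom_pos m
        have hsub : m - (d+1) = 0 := by omega
        rw [hsub]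
        have hch0 : ((2*m).choose 0 : ℝ) = 1 := by norm_num
        rw [hch0]
        have hd2 : (m:ℝ) ≤ ((d:ℝ)+1)^2 := by
          have hmd : (m:ℝ) ≤ (d:ℝ)+1 := by exact_mod_cast (by omega : m ≤ d+1)
          nlinarith [hmd, hmR]
        push_cast
        nlinarith [h1, hd2, hmR]
      · -- d < m
        set k : ℕ := m - (d+1) with hk
        have hk1 : k + 1 = m - d := by omega
        have hid := Nat.choose_succ_right_eq (2*m) k
        have hidR : ((2*m).choose (k+1) : ℝ) * ((k:ℝ)+1) = ((2*m).choose k : ℝ) * ((2*m - k : ℕ) : ℝ) := by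
          exact_mod_cast hid
        have h2mk : ((2*m - k : ℕ) : ℝ) = (m:ℝ) + (d:ℝ) + 1 := by
          rw [Nat.cast_sub (show k ≤ 2*m by omega)]
          push_cast
          have : (k:ℝ) = (m:ℝ) - (d:ℝ) - 1 := by
            rw [hk, Nat.cast_sub (show d+1 ≤ m by omega)]
            push_cast
            ring
          rw [this]
          ring
        have hkR : (k:ℝ) = (m:ℝ) - (d:ℝ) - 1 := by
          rw [hk, Nat.cast_sub (show d+1 ≤ m by omega)]
          push_cast
          ring
        set A : ℝ := ((2*m).choose (k+1) : ℝ) with hA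
        set B : ℝ := ((2*m).choose k : ℝ) with hB
        have hAnn : 0 ≤ A := by rw [hA]; positivity
        have hABid : A * ((m:ℝ) - d) = B * ((m:ℝ) + d + 1) := by
          rw [h2mk] at hidR
          rw [← hidR, hkR]
          ring
        have hAB : (A - B) * ((m:ℝ) + d + 1) = A * (2*(d:ℝ)+1) := by
          linear_combination hABid
        have hAcb : A ≤ (Nat.centralBinom m : ℝ) := by
          rw [hA]
          exact_mod_cast Nat.choose_le_centralBinom (k+1) m
        have hABnn : 0 ≤ A - B := by
          nlinarith [hAB, mul_nonneg hAnn (show (0:ℝ) ≤ 2*(d:ℝ)+1 by positivity), hmR,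
            (show (0:ℝ) ≤ (d:ℝ) by positivity)]
        have hstep : (A - B) * (m:ℝ) ≤ (Nat.centralBinom m : ℝ) * (2*(d:ℝ)+1) := by
          have h1 : (A - B) * (m:ℝ) ≤ (A - B) * ((m:ℝ) + d + 1) := by
            apply mul_le_mul_of_nonneg_left _ hABnn
            push_cast
            have : (0:ℝ) ≤ (d:ℝ) := by positivity
            linarith
          rw [hAB] at h1
          have h2 : A * (2*(d:ℝ)+1) ≤ (Nat.centralBinom m : ℝ) * (2*(d:ℝ)+1) := by
            apply mul_le_mul_of_nonneg_right hAcb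
            positivity
          linarith
        have ihm : ((Nat.centralBinom m : ℝ) - A) * (m:ℝ) ≤ (Nat.centralBinom m : ℝ) * d^2 := by
          have := ih
          have hk2 : m - d = k + 1 := hk1.symm
          rw [hk2] at this
          rw [← hA] at this
          calc ((Nat.centralBinom m : ℝ) - A) * (m:ℝ)
              ≤ ((Nat.centralBinom m : ℝ) * d^2 / m) * m := by
                apply mul_le_mul_of_nonneg_right this (le_of_lt hmR)
            _ = (Nat.centralBinom m : ℝ) * d^2 := by field_simp
        push_cast
        nlinarith [ihm, hstep]
        
lemma part2_bound (x : ℤ) (hx : 1 ≤ x) (t : ℕ) (ht : 1 ≤ t) :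
    ((bb t 0 - bb t (2*x) : ℤ) : ℝ) / 2^t ≤ 3 * (x:ℝ)^2 / ((t:ℝ) * Real.sqrt t) := by
  have hxR : (1:ℝ) ≤ (x:ℝ) := by exact_mod_cast hx
  rcases Nat.even_or_odd t with ⟨m, hm⟩ | ⟨m, hm⟩
  · -- even
    have hm2 : t = 2*m := by omega
    subst hm2
    have hm1 : 1 ≤ m := by omega
    have hmR : (0:ℝ) < m := by exact_mod_cast hm1
    set d : ℕ := x.toNat with hd
    have hdx : (d:ℤ) = x := Int.toNat_of_nonneg (by omega)
    have hdxR : (d:ℝ) = (x:ℝ) := by exact_mod_cast hdx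
    have hkey : ((bb (2*m) 0 - bb (2*m) (2*x) : ℤ) : ℝ)
        ≤ (Nat.centralBinom m : ℝ) * (x:ℝ)^2 / m := by
      rcases le_or_gt d m with hdm | hdm
      · have hb2 : bb (2*m) (2*x) = ((2*m).choose (m - d) : ℤ) := by
          have h := bb_choose (2*m) (m-d) (by omega)
          have he : ((2*m:ℕ):ℤ) - 2*((m-d:ℕ):ℤ) = 2*x := by
            rw [Nat.cast_sub hdm]
            push_cast
            omega
          rw [he] at h
          exact h
        rw [bb_two_m_zero m, hb2]
        have h := choose_diff m hm1 d
        rw [hdxR] at h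
        push_cast
        push_cast at h
        linarith
      · have hb2 : bb (2*m) (2*x) = 0 := by
          apply bb_vanish
          push_cast
          omega
        rw [bb_two_m_zero m, hb2]
        have hcbnn : (0:ℝ) ≤ (Nat.centralBinom m : ℝ) := by positivity
        have hmd : (m:ℝ) ≤ (x:ℝ)^2 := by
          have h1 : (m:ℝ) < (d:ℝ) := by exact_mod_cast hdm
          rw [hdxR] at h1
          nlinarith
        rw [le_div_iff₀ hmR]
        push_cast
        nlinarith
    -- now divide by 2^(2m) = 4^m
    have h4 : (2:ℝ)^(2*m) = 4^m := by
      rw [show (4:ℝ) = 2^2 by norm_num, ← pow_mul]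
    have hcb : (Nat.centralBinom m : ℝ) = creal m * 4^m := by
      unfold creal
      field_simp
    have h4pos : (0:ℝ) < 4^m := by positivity
    have step1 : ((bb (2*m) 0 - bb (2*m) (2*x) : ℤ) : ℝ) / 2^(2*m)
        ≤ creal m * (x:ℝ)^2 / m := by
      rw [h4, div_le_iff₀ h4pos]
      rw [hcb] at hkey
      calc ((bb (2*m) 0 - bb (2*m) (2*x) : ℤ) : ℝ) ≤ creal m * 4^m * (x:ℝ)^2 / m := hkey
        _ = creal m * (x:ℝ)^2 / m * 4^m := by ring
    refine le_trans step1 ?_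
    -- creal m * x^2 / m ≤ 3 x^2 / ((2m) sqrt (2m))
    have hs2m : (0:ℝ) < Real.sqrt (2*m) := Real.sqrt_pos.2 (by positivity)
    have hcle : creal m ≤ 1 / Real.sqrt (2*m) := by
      refine le_trans (creal_le m) ?_
      rw [show (1:ℝ)/(2*(m:ℝ)+1) = ((2*(m:ℝ)+1))⁻¹ by ring, Real.sqrt_inv]
      rw [one_div]
      apply inv_anti₀ hs2m
      apply Real.sqrt_le_sqrt
      linarith
    have htR : ((2*m : ℕ):ℝ) = 2*(m:ℝ) := by push_cast; ring
    rw [htR]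
    have hx2 : (0:ℝ) < (x:ℝ)^2 := by positivity
    calc creal m * (x:ℝ)^2 / m ≤ (1/Real.sqrt (2*m)) * (x:ℝ)^2 / m := by
          gcongr
      _ = 2 * (x:ℝ)^2 / (2*(m:ℝ) * Real.sqrt (2*m)) := by
          field_simp
      _ ≤ 3 * (x:ℝ)^2 / (2*(m:ℝ) * Real.sqrt (2*m)) := by
          gcongr
          norm_num
  · -- odd : both terms vanish
    have hb0 : bb t 0 = 0 := by
      apply bb_parity
      omega
    have hb2 : bb t (2*x) = 0 := by
      apply bb_parity
      omega
    rw [hb0, hb2]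
    simp only [sub_zero, Int.cast_zero, zero_div]
    positivity

lemma summable_bound (x : ℤ) : Summable (fun t : ℕ => 3 * (x:ℝ)^2 / ((t:ℝ) * Real.sqrt t)) := by
  have h1 : Summable (fun t : ℕ => (1:ℝ) / (t:ℝ)^((3:ℝ)/2)) :=
    Real.summable_one_div_nat_rpow.mpr (by norm_num)
  have h2 : ∀ t : ℕ, (3*(x:ℝ)^2) * ((1:ℝ)/(t:ℝ)^((3:ℝ)/2)) = 3*(x:ℝ)^2 / ((t:ℝ)*Real.sqrt t) := by
    intro t
    rcases Nat.eq_zero_or_pos t with rfl | ht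
    · norm_num
    · have htR : (0:ℝ) < t := by exact_mod_cast ht
      have hpow : (t:ℝ)^((3:ℝ)/2) = (t:ℝ) * Real.sqrt t := by
        rw [show (3:ℝ)/2 = 1 + 1/2 by norm_num, Real.rpow_add htR, Real.rpow_one,
          ← Real.sqrt_eq_rpow]
      rw [hpow]
      ring
  exact (h1.mul_left (3*(x:ℝ)^2)).congr h2

lemma esum_pin (x : ℤ) (hx : 1 ≤ x) (t : ℕ) :
    esum P1 (fun e => e = x) t x
      = ENNReal.ofReal (((bb t 0 - bb t (2*x) : ℤ) : ℝ) / 2^t) := by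
  have hxR : (0:ℝ) < (x:ℝ) := by exact_mod_cast (show (0:ℤ) < x by omega)
  rw [esum_eq P1 (fun e => e = x) (fun b hb => hb) t x hx]
  rw [psum_congr _ (fun e => x * indf x e) P1
    (fun e => by
      simp only [indf]
      split_ifs with hc
      · rw [hc]; ring
      · ring) t x]
  rw [psum_mul x (indf x) P1 t x, cntE_eq x hx t x hx]
  rw [show x - x = 0 from by ring, show x + x = 2*x from by ring]
  congr 1
  push_cast
  have hxne : (x:ℝ) ≠ 0 := ne_of_gt hxR
  field_simp

end CondWalkAux

/-- for the conditioned walk started at `x ≥ 1`, the probability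
of never returning to the starting point is `P̂_x[τ̄_x = ∞] = 1/(2x)`.
In particular, the walk is transient: almost surely it visits `x` only
finitely many times. -/
theorem cond_walk_escape_probability
    {Ω : Type*} [MeasurableSpace Ω] (Pr : Measure Ω) (X : ℕ → Ω → ℤ)
    (x : ℤ) (hx : 1 ≤ x) (h : IsCondWalk Pr X x) :
    Pr {ω | ∀ t : ℕ, 1 ≤ t → X t ω ≠ x} = ENNReal.ofReal (1 / (2 * (x : ℝ)))
      ∧ Pr {ω | {t : ℕ | X t ω = x}.Infinite} = 0 := by

  classical
  haveI hprob : IsProbabilityMeasure Pr := h.1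
  have hmeasX : ∀ t, Measurable (X t) := h.2.1
  have hxR : (0:ℝ) < (x:ℝ) := by exact_mod_cast (show (0:ℤ) < x by omega)
  -- full measure events
  set Fev : ℕ → Set Ω := fun n =>
    {ω | X 0 ω = x ∧ (∀ s, 1 ≤ s → s ≤ n → P1 (X s ω)) ∧ (fun _ : ℤ => True) (X n ω)} with hFev
  have hmeasZ : ∀ (s : Set ℤ), MeasurableSet s := fun s => trivial
  have hFev_meas : ∀ n, MeasurableSet (Fev n) := by
    intro n
    have : Fev n = (X 0) ⁻¹' {x} ∩
        (⋂ (s : ℕ) (_ : 1 ≤ s) (_ : s ≤ n), (X s) ⁻¹' {b | P1 b}) := by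
      ext ω
      simp only [hFev, Set.mem_setOf_eq, Set.mem_inter_iff, Set.mem_preimage,
        Set.mem_singleton_iff, Set.mem_iInter]
      tauto
    rw [this]
    exact ((hmeasX 0) (hmeasZ _)).inter
      (MeasurableSet.iInter fun s => MeasurableSet.iInter fun _ =>
        MeasurableSet.iInter fun _ => (hmeasX s) (hmeasZ _))
  have hFev_one : ∀ n, Pr (Fev n) = 1 := by
    intro n
    rw [hFev]
    rw [meas_event Pr X x h P1 (fun _ => True) n]
    rw [esum_eq P1 (fun _ => True) (fun b hb => hb) n x hx]
    rw [psum_congr _ idf P1 (fun e => by simp [idf]) n x, psum_id_P1 n x hx]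
    have hv : ((x * 2 ^ n : ℤ) : ℝ) / ((x:ℝ) * 2 ^ n) = 1 := by
      rw [show ((x * 2 ^ n : ℤ) : ℝ) = (x:ℝ) * 2^n by push_cast; ring,
        div_self (by positivity)]
    rw [hv]
    exact ENNReal.ofReal_one
  have hFev_compl : ∀ n, Pr ((Fev n)ᶜ) = 0 := by
    intro n
    rw [measure_compl (hFev_meas n) (measure_ne_top Pr _), hFev_one n, measure_univ]
    simp
  -- ====================== PART 1 ======================
  set A : ℕ → Set Ω := fun n => {ω | ∀ s, 1 ≤ s → s ≤ n → X s ω ≠ x} with hA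
  have hA_meas : ∀ n, MeasurableSet (A n) := by
    intro n
    have : A n = ⋂ (s : ℕ) (_ : 1 ≤ s) (_ : s ≤ n), (X s) ⁻¹' {b | b ≠ x} := by
      ext ω
      simp only [hA, Set.mem_setOf_eq, Set.mem_iInter, Set.mem_preimage]
    rw [this]
    exact MeasurableSet.iInter fun s => MeasurableSet.iInter fun _ =>
      MeasurableSet.iInter fun _ => (hmeasX s) (hmeasZ _)
  have hA_anti : Antitone A := by
    intro m n hmn ω hω s h1 h2
    exact hω s h1 (le_trans h2 hmn)
  have hEv : ∀ n, Pr (A n) = esum (Pav x) (fun _ => True) n x := by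
    intro n
    set E : Set Ω := {ω | X 0 ω = x ∧ (∀ s, 1 ≤ s → s ≤ n → Pav x (X s ω)) ∧
        (fun _ : ℤ => True) (X n ω)} with hE
    have hsub : E ⊆ A n := fun ω hω s h1 h2 => (hω.2.1 s h1 h2).2
    have hsub2 : A n ∩ Fev n ⊆ E := by
      rintro ω ⟨ha, hf⟩
      exact ⟨hf.1, fun s h1 h2 => ⟨hf.2.1 s h1 h2, ha s h1 h2⟩, trivial⟩
    have h1 : Pr (A n) ≤ Pr E := by
      calc Pr (A n) = Pr (A n ∩ Fev n) + Pr (A n \ Fev n) :=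
            (measure_inter_add_diff _ (hFev_meas n)).symm
        _ ≤ Pr E + Pr ((Fev n)ᶜ) :=
            add_le_add (measure_mono hsub2) (measure_mono (fun ω hω => hω.2))
        _ = Pr E := by rw [hFev_compl n, add_zero]
    have h2 : Pr E ≤ Pr (A n) := measure_mono hsub
    have h3 : Pr E = esum (Pav x) (fun _ => True) n x := by
      rw [hE]
      exact meas_event Pr X x h (Pav x) (fun _ => True) n
    rw [← h3]
    exact le_antisymm h1 h2
  have hval : ∀ T : ℕ, Pr (A (T+1)) =
      ENNReal.ofReal ((psum idf (Pav x) (T+1) x : ℝ) / ((x:ℝ) * 2 ^ (T+1))) := by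
    intro T
    rw [hEv (T+1), esum_eq (Pav x) (fun _ => True) (fun b hb => hb.1) (T+1) x hx,
      psum_congr _ idf (Pav x) (fun e => by simp [idf]) (T+1) x]
  have hlow : ∀ T : ℕ, ENNReal.ofReal (1/(2*(x:ℝ))) ≤ Pr (A (T+1)) := by
    intro T
    rw [hval T]
    apply ENNReal.ofReal_le_ofReal
    have hps := av_lower x hx T
    have hpsR : (2:ℝ)^T ≤ ((psum idf (Pav x) (T+1) x : ℤ) : ℝ) := by exact_mod_cast hps
    have heq : (1:ℝ)/(2*(x:ℝ)) = (2:ℝ)^T / ((x:ℝ) * 2^(T+1)) := by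
      field_simp
      ring
    rw [heq]
    gcongr
  have hupp : ∀ T : ℕ, Pr (A (T+1)) ≤
      ENNReal.ofReal (1/(2*(x:ℝ)) + (((x:ℝ) + (x:ℝ)^2)/(x:ℝ)) * creal (T/2)) := by
    intro T
    rw [hval T]
    apply ENNReal.ofReal_le_ofReal
    have hps := av_upper x hx T
    have hNb := Nbar_le T
    have hpsR : ((psum idf (Pav x) (T+1) x : ℤ) : ℝ) ≤
        2^T + ((x:ℝ) + (x:ℝ)^2) * ((bb T 0 + bb T 1 : ℤ) : ℝ) := by
      exact_mod_cast hps
    have hCnn : (0:ℝ) ≤ (x:ℝ) + (x:ℝ)^2 := by positivity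
    have hchain : ((psum idf (Pav x) (T+1) x : ℤ) : ℝ) ≤
        2^T + ((x:ℝ) + (x:ℝ)^2) * (2 * creal (T/2) * 2^T) := by
      refine le_trans hpsR ?_
      have := mul_le_mul_of_nonneg_left hNb hCnn
      linarith
    rw [div_le_iff₀ (by positivity)]
    have hexp : (1/(2*(x:ℝ)) + (((x:ℝ) + (x:ℝ)^2)/(x:ℝ)) * creal (T/2)) * ((x:ℝ) * 2^(T+1))
        = 2^T + ((x:ℝ) + (x:ℝ)^2) * (2 * creal (T/2) * 2^T) := by
      field_simp
      ring
    rw [hexp]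
    exact hchain
  have hdiv2 : Filter.Tendsto (fun T : ℕ => T/2) Filter.atTop Filter.atTop :=
    Filter.tendsto_atTop_atTop.mpr fun b => ⟨2*b, fun T hT => by omega⟩
  have hcr : Filter.Tendsto (fun T : ℕ => creal (T/2)) Filter.atTop (nhds 0) :=
    creal_tendsto.comp hdiv2
  have hupper_lim : Filter.Tendsto
      (fun T : ℕ => ENNReal.ofReal (1/(2*(x:ℝ)) + (((x:ℝ) + (x:ℝ)^2)/(x:ℝ)) * creal (T/2)))
      Filter.atTop (nhds (ENNReal.ofReal (1/(2*(x:ℝ))))) := by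
    have h1 : Filter.Tendsto
        (fun T : ℕ => 1/(2*(x:ℝ)) + (((x:ℝ) + (x:ℝ)^2)/(x:ℝ)) * creal (T/2))
        Filter.atTop (nhds (1/(2*(x:ℝ)) + (((x:ℝ) + (x:ℝ)^2)/(x:ℝ)) * 0)) :=
      tendsto_const_nhds.add (hcr.const_mul _)
    rw [mul_zero, add_zero] at h1
    exact (ENNReal.continuous_ofReal.tendsto _).comp h1
  have hshift : Filter.Tendsto (fun T : ℕ => Pr (A (T+1))) Filter.atTop
      (nhds (Pr (⋂ n, A n))) := by
    have h0 := MeasureTheory.tendsto_measure_iInter_atTop (μ := Pr) (s := A)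
      (fun n => (hA_meas n).nullMeasurableSet) hA_anti ⟨0, measure_ne_top _ _⟩
    exact h0.comp (Filter.tendsto_add_atTop_nat 1)
  have hsq : Filter.Tendsto (fun T : ℕ => Pr (A (T+1))) Filter.atTop
      (nhds (ENNReal.ofReal (1/(2*(x:ℝ))))) :=
    tendsto_of_tendsto_of_tendsto_of_le_of_le tendsto_const_nhds hupper_lim hlow hupp
  have hP1 : Pr (⋂ n, A n) = ENNReal.ofReal (1/(2*(x:ℝ))) :=
    tendsto_nhds_unique hshift hsq
  have hsetEq : {ω : Ω | ∀ t : ℕ, 1 ≤ t → X t ω ≠ x} = ⋂ n, A n := by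
    ext ω
    simp only [Set.mem_setOf_eq, Set.mem_iInter, hA]
    constructor
    · intro hω n s h1 h2
      exact hω s h1
    · intro hω t ht
      exact hω t t ht le_rfl
  -- ====================== PART 2 ======================
  set S : ℕ → Set Ω := fun t => {ω | X t ω = x} with hS
  have hSbound : ∀ t, 1 ≤ t →
      Pr (S t) ≤ ENNReal.ofReal (3*(x:ℝ)^2 / ((t:ℝ) * Real.sqrt t)) := by
    intro t ht
    set E2 : Set Ω := {ω | X 0 ω = x ∧ (∀ s, 1 ≤ s → s ≤ t → P1 (X s ω)) ∧
        (fun e : ℤ => e = x) (X t ω)} with hE2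
    have hsub2 : S t ∩ Fev t ⊆ E2 := by
      rintro ω ⟨hs, hf⟩
      exact ⟨hf.1, hf.2.1, hs⟩
    have h1 : Pr (S t) ≤ Pr E2 := by
      calc Pr (S t) = Pr (S t ∩ Fev t) + Pr (S t \ Fev t) :=
            (measure_inter_add_diff _ (hFev_meas t)).symm
        _ ≤ Pr E2 + Pr ((Fev t)ᶜ) :=
            add_le_add (measure_mono hsub2) (measure_mono (fun ω hω => hω.2))
        _ = Pr E2 := by rw [hFev_compl t, add_zero]
    have h2 : Pr E2 = esum P1 (fun e => e = x) t x := by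
      rw [hE2]
      exact meas_event Pr X x h P1 (fun e => e = x) t
    have h4 : Pr E2 = ENNReal.ofReal (((bb t 0 - bb t (2*x) : ℤ) : ℝ) / 2^t) := by
      rw [h2, esum_pin x hx t]
    refine le_trans h1 ?_
    rw [h4]
    exact ENNReal.ofReal_le_ofReal (part2_bound x hx t ht)
  have hsum_ne_top : (∑' t, Pr (S t)) ≠ ⊤ := by
    have hle : ∀ t : ℕ, Pr (S t) ≤
        (if t = 0 then 1 else 0) + ENNReal.ofReal (3*(x:ℝ)^2 / ((t:ℝ) * Real.sqrt t)) := by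
      intro t
      rcases Nat.eq_zero_or_pos t with rfl | ht
      · calc Pr (S 0) ≤ 1 := prob_le_one
          _ ≤ _ := by simp
      · refine le_trans (hSbound t ht) ?_
        rw [if_neg (by omega), zero_add]
    have hnn : ∀ t : ℕ, 0 ≤ 3*(x:ℝ)^2 / ((t:ℝ) * Real.sqrt t) := by
      intro t
      positivity
    have hlt : (∑' t, Pr (S t)) < ⊤ := by
      calc (∑' t, Pr (S t))
          ≤ ∑' t : ℕ, ((if t = 0 then 1 else 0) +
              ENNReal.ofReal (3*(x:ℝ)^2 / ((t:ℝ) * Real.sqrt t))) := ENNReal.tsum_le_tsum hle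
        _ = (∑' t : ℕ, (if t = 0 then (1:ℝ≥0∞) else 0)) +
              ∑' t : ℕ, ENNReal.ofReal (3*(x:ℝ)^2 / ((t:ℝ) * Real.sqrt t)) := ENNReal.tsum_add
        _ = 1 + ENNReal.ofReal (∑' t : ℕ, 3*(x:ℝ)^2 / ((t:ℝ) * Real.sqrt t)) := by
            rw [tsum_ite_eq (0:ℕ) (fun _ => (1:ℝ≥0∞)),
              ENNReal.ofReal_tsum_of_nonneg hnn (summable_bound x)]
        _ < ⊤ := ENNReal.add_lt_top.2 ⟨ENNReal.one_lt_top, ENNReal.ofReal_lt_top⟩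
    exact hlt.ne
  have hlimsup : Pr (Filter.limsup S Filter.atTop) = 0 :=
    MeasureTheory.measure_limsup_atTop_eq_zero hsum_ne_top
  have hsubinf : {ω : Ω | {t : ℕ | X t ω = x}.Infinite} ⊆ Filter.limsup S Filter.atTop := by
    intro ω hω
    rw [Filter.mem_limsup_iff_frequently_mem, Filter.frequently_atTop]
    intro a
    obtain ⟨b, hb, hab⟩ := Set.Infinite.exists_gt hω a
    exact ⟨b, le_of_lt hab, hb⟩
  constructor
  · rw [hsetEq]
    exact hP1
  · exact measure_mono_null hsubinf hlimsup
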